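/- Let μ > 0 and β ∈ [0,1]. Then for every t ≥ 0, μ·t^β/(t + μ) ≤ (1 − β)^{1−β} · β^β · μ^β, where real powers are taken with the convention 0⁰ = 1. -/
import Mathlib


/-- **Scalar bound for the regularized power.**
Let `μ > 0` and `β ∈ [0,1]`. Then for every `t ≥ 0`,
`μ t^β / (t + μ) ≤ (1 − β)^{1−β} β^β μ^β`, where powers are real powers
(`Real.rpow`, with the convention `0⁰ = 1`). -/
theorem scalar_regularized_power_bound
    (μ β : ℝ) (hμ : 0 < μ) (hβ0 : 0 ≤ β) (hβ1 : β ≤ 1) :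
    ∀ t : ℝ, 0 ≤ t →
      μ * t ^ β / (t + μ) ≤ (1 - β) ^ (1 - β) * β ^ β * μ ^ β := by
  intro t ht
  have hden : 0 < t + μ := by linarith
  rcases eq_or_lt_of_le hβ0 with hβ0' | hβ0'
  · -- β = 0
    subst hβ0'
    simp only [Real.rpow_zero, sub_zero, Real.rpow_one, mul_one]
    rw [div_le_iff₀ hden]
    nlinarith
  rcases eq_or_lt_of_le hβ1 with hβ1' | hβ1'
  · -- β = 1
    subst hβ1'
    simp only [sub_self, Real.rpow_zero, Real.rpow_one, one_mul]
    rw [div_le_iff₀ hden]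
    nlinarith
  -- 0 < β < 1
  have h1β : 0 < 1 - β := by linarith
  have key : t ^ β * μ ^ (1 - β) ≤ β ^ β * (1 - β) ^ (1 - β) * (t + μ) := by
    have hgm := Real.geom_mean_le_arith_mean2_weighted (le_of_lt hβ0')
      (le_of_lt h1β) (div_nonneg ht hβ0) (div_nonneg hμ.le h1β.le) (by ring)
    have h1 : (t / β) ^ β = t ^ β / β ^ β := Real.div_rpow ht hβ0 β
    have h2 : (μ / (1 - β)) ^ (1 - β) = μ ^ (1 - β) / (1 - β) ^ (1 - β) :=
      Real.div_rpow hμ.le h1β.le (1-β)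
    rw [h1, h2] at hgm
    have he : β * (t / β) + (1 - β) * (μ / (1 - β)) = t + μ := by
      field_simp
    rw [he] at hgm
    have hb : 0 < β ^ β := Real.rpow_pos_of_pos hβ0' β
    have hob : 0 < (1 - β) ^ (1 - β) := Real.rpow_pos_of_pos h1β (1 - β)
    calc t ^ β * μ ^ (1 - β)
        = (t ^ β / β ^ β * (μ ^ (1 - β) / (1 - β) ^ (1 - β))) * (β ^ β * (1 - β) ^ (1 - β)) := by
          field_simp
      _ ≤ (t + μ) * (β ^ β * (1 - β) ^ (1 - β)) := by
          apply mul_le_mul_of_nonneg_right hgm (by positivity)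
      _ = β ^ β * (1 - β) ^ (1 - β) * (t + μ) := by ring
  have hsplit : μ * t ^ β = μ ^ β * (t ^ β * μ ^ (1 - β)) := by
    have : μ ^ β * μ ^ (1 - β) = μ := by
      rw [← Real.rpow_add hμ]; norm_num
    calc μ * t ^ β = μ ^ β * μ ^ (1 - β) * t ^ β := by rw [this]
      _ = μ ^ β * (t ^ β * μ ^ (1 - β)) := by ring
  rw [div_le_iff₀ hden, hsplit]
  have hμβ : 0 ≤ μ ^ β := (Real.rpow_pos_of_pos hμ β).le
  calc μ ^ β * (t ^ β * μ ^ (1 - β))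
      ≤ μ ^ β * (β ^ β * (1 - β) ^ (1 - β) * (t + μ)) :=
        mul_le_mul_of_nonneg_left key hμβ
    _ = (1 - β) ^ (1 - β) * β ^ β * μ ^ β * (t + μ) := by ring
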